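/- Let X, Y be metric spaces and suppose there is M > 0 such that any two points x, y ∈ X are joined by a rectifiable curve γ with ∫_γ w ≤ M·φ(d_X(x,y)), where φ is continuous at 0 with φ(0) = 0 and Y is complete. Then every f ∈ B_w(X,Y) (i.e. D*f(z) ≤ C·w(z) on X) extends continuously to the completion of X. -/

import Mathlib

open Set Filter Metric ENNReal NNReal

/-- `D* f x`: upper dilation of `f` at `x` (0 at isolated points). -/
noncomputable def Dstar {X Y : Type*} [MetricSpace X] [MetricSpace Y] (f : X → Y) (x : X) :
    ℝ≥0∞ :=
  Filter.limsup (fun y => edist (f x) (f y) / edist x y) (nhdsWithin x {x}ᶜ)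

/-- A curve parametrized on `[0,1]` joining `x` to `y`. -/
def IsCurveFrom {X : Type*} [MetricSpace X] (γ : ℝ → X) (x y : X) : Prop :=
  ContinuousOn γ (Set.Icc 0 1) ∧ γ 0 = x ∧ γ 1 = y

/-- Rectifiability of a curve parametrized on `[0,1]`. -/
def RectifiableCurve {X : Type*} [MetricSpace X] (γ : ℝ → X) : Prop :=
  eVariationOn γ (Set.Icc 0 1) ≠ ⊤

/-- `I` is the curve integral of `g` along `γ : [0,1] → X` (limit of Riemann sums with respect
to arclength). -/
def IsCurveIntegral {X : Type*} [MetricSpace X] (γ : ℝ → X) (g : X → ℝ) (I : ℝ) : Prop :=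
  ∀ ε > 0, ∃ δ > 0, ∀ n : ℕ, ∀ t s : ℕ → ℝ,
    0 < n → t 0 = 0 → t n = 1 →
    (∀ i < n, t i < t (i + 1)) →
    (∀ i < n, t (i + 1) - t i < δ) →
    (∀ i < n, s i ∈ Set.Icc (t i) (t (i + 1))) →
    |I - ∑ i ∈ Finset.range n,
        g (γ (s i)) * (eVariationOn γ (Set.Icc (t i) (t (i + 1)))).toReal| < ε

/-- The weighted distance `d_w`. -/
noncomputable def wDist {X : Type*} [MetricSpace X] (w : X → ℝ) (x y : X) : ℝ :=
  sInf {I | ∃ γ : ℝ → X, IsCurveFrom γ x y ∧ RectifiableCurve γ ∧ IsCurveIntegral γ w I}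

/-- The inner (length) distance `d₁`. -/
noncomputable def innerDist {Y : Type*} [MetricSpace Y] (u v : Y) : ℝ :=
  sInf {L | ∃ δ : ℝ → Y, IsCurveFrom δ u v ∧ eVariationOn δ (Set.Icc 0 1) = ENNReal.ofReal L}

/-- The class `RO^K_w(X,Y)` of regularly oscillating mappings. -/
def RegOsc {X Y : Type*} [MetricSpace X] [MetricSpace Y] (w : X → ℝ) (K : ℝ) (f : X → Y) :
    Prop :=
  (∀ x, Dstar f x ≠ ⊤) ∧
  (∀ x : X, ∀ r : ℝ, 0 < r → r < w x → Bornology.IsBounded (f '' Metric.ball x r)) ∧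
  (∀ x : X, ∀ r : ℝ, 0 < r → r < w x →
    Dstar f x ≤ ENNReal.ofReal ((K / r) * ⨆ y : Metric.ball x r, dist (f x) (f y)))



/-- A tagged partition of `[a,b]` subordinate to the gauge `δ`. -/
def TaggedFine (δ : ℝ → ℝ) (a b : ℝ) : Prop :=
  ∃ n : ℕ, ∃ t s : ℕ → ℝ, 0 < n ∧ t 0 = a ∧ t n = b ∧ (∀ i < n, t i < t (i + 1)) ∧
    (∀ i < n, s i ∈ Set.Icc (t i) (t (i + 1))) ∧
    (∀ i < n, Set.Icc (t i) (t (i + 1)) ⊆ Set.Ioo (s i - δ (s i)) (s i + δ (s i)))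

lemma TaggedFine.extend {δ : ℝ → ℝ} {a x b' τ : ℝ} (h : TaggedFine δ a x)
    (hxb : x < b') (hτ : τ ∈ Set.Icc x b')
    (hsub : Set.Icc x b' ⊆ Set.Ioo (τ - δ τ) (τ + δ τ)) : TaggedFine δ a b' := by
  obtain ⟨n, t, s, hn, h0, hn1, hlt, hmem, hball⟩ := h
  refine ⟨n + 1, fun i => if i ≤ n then t i else b', fun i => if i < n then s i else τ,
    Nat.succ_pos n, by simp [h0], by simp, ?_, ?_, ?_⟩
  · intro i hi
    rcases Nat.lt_succ_iff_lt_or_eq.1 hi with hi' | rfl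
    · simp only [Nat.le_of_lt hi', Nat.succ_le_of_lt hi', if_pos]
      exact hlt i hi'
    · simp [hn1, hxb]
  · intro i hi
    rcases Nat.lt_succ_iff_lt_or_eq.1 hi with hi' | rfl
    · simpa only [hi', Nat.le_of_lt hi', Nat.succ_le_of_lt hi', if_pos] using hmem i hi'
    · simpa [hn1] using hτ
  · intro i hi
    rcases Nat.lt_succ_iff_lt_or_eq.1 hi with hi' | rfl
    · simpa only [hi', Nat.le_of_lt hi', Nat.succ_le_of_lt hi', if_pos] using hball i hi'
    · simpa [hn1] using hsub

/-- Cousin's lemma: every gauge on `[a,b]` admits a subordinate tagged partition. -/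
lemma cousin_lemma {δ : ℝ → ℝ} (hδ : ∀ t, 0 < δ t) {a b : ℝ} (hab : a < b) :
    TaggedFine δ a b := by
  set S := {x : ℝ | (a < x ∧ x ≤ b) ∧ TaggedFine δ a x} with hSdef
  have base : ∀ x y, a ≤ x → x < y → y ≤ x + δ x / 2 → TaggedFine δ x y := by
    intro x y _ h2 h3
    refine ⟨1, fun i => if i = 0 then x else y, fun _ => x, one_pos, rfl, by simp, ?_, ?_, ?_⟩
    · intro i hi; interval_cases i; simpa using h2
    · intro i hi; interval_cases i
      simpa using h2.le
    · intro i hi; interval_cases i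
      simp only [Nat.zero_ne_one, if_true, if_false, reduceIte]
      intro u hu
      norm_num at hu
      exact Set.mem_Ioo.2 ⟨by linarith [hu.1, hδ x], by linarith [hu.2, hδ x]⟩
  have hx0 : min b (a + δ a / 2) ∈ S := by
    constructor
    · exact ⟨lt_min hab (by linarith [hδ a]), min_le_left _ _⟩
    · exact base a _ le_rfl (lt_min hab (by linarith [hδ a])) (min_le_right _ _)
  have hne : S.Nonempty := ⟨_, hx0⟩
  have hbdd : BddAbove S := ⟨b, fun x hx => hx.1.2⟩
  set c := sSup S with hc
  have hac : a < c := lt_of_lt_of_le hx0.1.1 (le_csSup hbdd hx0)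
  have hcb : c ≤ b := csSup_le hne (fun x hx => hx.1.2)
  obtain ⟨x, hxS, hxc⟩ := exists_lt_of_lt_csSup hne (show c - δ c / 2 < c by linarith [hδ c])
  have hxlec : x ≤ c := le_csSup hbdd hxS
  set b' := min b (c + δ c / 2) with hb'
  have hcb' : c ≤ b' := le_min hcb (by linarith [hδ c])
  rcases lt_or_eq_of_le (hxlec.trans hcb') with hxb' | hxb'
  · have hb'T : TaggedFine δ a b' := by
      refine hxS.2.extend hxb' ⟨hxlec, hcb'⟩ ?_
      intro u hu
      have h1 : b' ≤ c + δ c / 2 := min_le_right _ _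
      exact ⟨by linarith [hu.1, hδ c], by linarith [hu.2, hδ c]⟩
    have hbc : b ≤ c := by
      by_contra h
      push_neg at h
      have hcb'2 : c < b' := lt_min h (by linarith [hδ c])
      have : b' ∈ S := ⟨⟨hac.trans hcb'2, min_le_left _ _⟩, hb'T⟩
      linarith [le_csSup hbdd this]
    have : b' = b := by
      rw [hb', le_antisymm hcb hbc]
      exact min_eq_left (by linarith [hδ b])
    rwa [this] at hb'T
  · -- x = b', so c = b' and hence b ≤ c, c = b, x = b
    have hxc' : x = c := le_antisymm hxlec (hxb' ▸ hcb')
    have hbc : b ≤ c := by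
      by_contra h
      push_neg at h
      have : c < b' := lt_min h (by linarith [hδ c])
      rw [← hxb', hxc'] at this
      exact lt_irrefl _ this
    have : x = b := by rw [hxc']; exact le_antisymm hcb hbc
    rw [← this]
    exact hxS.2

theorem Dstar_def' {X Y : Type*} [MetricSpace X] [MetricSpace Y] (f : X → Y) (x : X) :
  Dstar f x = Filter.limsup (fun y => edist (f x) (f y) / edist x y) (nhdsWithin x {x}ᶜ) := rfl

lemma pointwise_est {X Y : Type*} [MetricSpace X] [MetricSpace Y]
    {f : X → Y} {c : ℝ} {x : X} (hc : 0 ≤ c) (hD : Dstar f x < ENNReal.ofReal c) :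
    ∀ᶠ y in nhds x, dist (f x) (f y) ≤ c * dist x y := by
  have h := Filter.eventually_lt_of_limsup_lt hD
  rw [eventually_nhdsWithin_iff] at h
  filter_upwards [h] with y hy
  by_cases hxy : y = x
  · simp [hxy]
  · have h2 := hy (Set.mem_compl_singleton_iff.2 hxy)
    have hne : edist x y ≠ 0 := by simpa using fun h => hxy (h.symm)
    have h3 : edist (f x) (f y) ≤ ENNReal.ofReal c * edist x y :=
      (ENNReal.div_le_iff hne (edist_ne_top x y)).1 h2.le
    rw [edist_dist, edist_dist, ← ENNReal.ofReal_mul hc] at h3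
    exact (ENNReal.ofReal_le_ofReal_iff (by positivity)).1 h3

lemma curve_estimate {X Y : Type*} [MetricSpace X] [MetricSpace Y]
    (w : X → ℝ) (hw : ∀ x, 0 ≤ w x) (f : X → Y) (C' : ℝ) (hC' : 0 ≤ C')
    (hB : ∀ z, Dstar f z ≤ ENNReal.ofReal (C' * w z))
    (γ : ℝ → X) (hγ : ContinuousOn γ (Set.Icc 0 1)) (hrect : RectifiableCurve γ)
    (I : ℝ) (hI : IsCurveIntegral γ w I) :
    dist (f (γ 0)) (f (γ 1)) ≤ C' * I := by
  classical
  have hLne : eVariationOn γ (Set.Icc 0 1) ≠ ⊤ := hrect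
  set L := (eVariationOn γ (Set.Icc 0 1)).toReal with hLdef
  have hL0 : 0 ≤ L := ENNReal.toReal_nonneg
  refine le_of_forall_pos_le_add ?_
  intro ε hε
  set ε₂ := ε / (2 * (L + 1)) with hε₂def
  have hε₂pos : 0 < ε₂ := by positivity
  set ε₃ := ε / (2 * (C' + 1)) with hε₃def
  have hε₃pos : 0 < ε₃ := by positivity
  obtain ⟨δI, hδI, hIR⟩ := hI ε₃ hε₃pos
  have key : ∀ τ, τ ∈ Set.Icc (0:ℝ) 1 → ∃ ρ, 0 < ρ ∧ ∀ u ∈ Set.Icc (0:ℝ) 1, |u - τ| < ρ →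
      dist (f (γ τ)) (f (γ u)) ≤ (C' * w (γ τ) + ε₂) * dist (γ τ) (γ u) := by
    intro τ hτ
    have hwτ := hw (γ τ)
    have hcpos : (0:ℝ) < C' * w (γ τ) + ε₂ := by positivity
    have hD : Dstar f (γ τ) < ENNReal.ofReal (C' * w (γ τ) + ε₂) :=
      lt_of_le_of_lt (hB (γ τ)) ((ENNReal.ofReal_lt_ofReal_iff hcpos).2 (by linarith))
    have hev := pointwise_est hcpos.le hD
    have hev2 : ∀ᶠ u in nhdsWithin τ (Set.Icc 0 1),
        dist (f (γ τ)) (f (γ u)) ≤ (C' * w (γ τ) + ε₂) * dist (γ τ) (γ u) :=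
      ((hγ τ hτ).tendsto).eventually hev
    obtain ⟨ρ, hρ, hsub⟩ := Metric.mem_nhdsWithin_iff.1 hev2
    refine ⟨ρ, hρ, fun u hu hdu => hsub ⟨?_, hu⟩⟩
    rw [Metric.mem_ball, Real.dist_eq]
    exact hdu
  choose ρ hρpos hρ using key
  set g : ℝ → ℝ := fun τ => if h : τ ∈ Set.Icc (0:ℝ) 1 then min (ρ τ h) (δI / 2) else 1
    with hgdef
  have hgpos : ∀ τ, 0 < g τ := by
    intro τ
    by_cases h : τ ∈ Set.Icc (0:ℝ) 1
    · simp only [hgdef, dif_pos h]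
      exact lt_min (hρpos _ _) (by linarith)
    · simp only [hgdef, dif_neg h]
      exact one_pos
  obtain ⟨n, t, s, hn, ht0, htn, hlt, hmem, hball⟩ := cousin_lemma hgpos (zero_lt_one (α := ℝ))
  -- monotonicity of the partition points
  have tmono : ∀ i j, i ≤ j → j ≤ n → t i ≤ t j := by
    intro i j hij hjn
    induction j with
    | zero => exact le_of_eq (by rw [Nat.le_zero.1 hij])
    | succ k ih =>
      rcases eq_or_lt_of_le hij with rfl | hi'
      · exact le_rfl
      · exact (ih (Nat.lt_succ_iff.1 hi') ((Nat.le_succ k).trans hjn)).trans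
          (hlt k (Nat.lt_of_succ_le hjn)).le
  have htmem : ∀ i, i ≤ n → t i ∈ Set.Icc (0:ℝ) 1 := by
    intro i hi
    exact ⟨ht0 ▸ tmono 0 i (Nat.zero_le i) hi, htn ▸ tmono i n hi le_rfl⟩
  have hsmem : ∀ i, i < n → s i ∈ Set.Icc (0:ℝ) 1 := by
    intro i hi
    obtain ⟨h1, h2⟩ := hmem i hi
    exact ⟨(htmem i hi.le).1.trans h1, h2.trans (htmem (i+1) hi).2⟩
  -- each piece has finite variation
  have hsubI : ∀ i, i < n → Set.Icc (t i) (t (i+1)) ⊆ Set.Icc (0:ℝ) 1 := fun i hi =>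
    Set.Icc_subset_Icc (htmem i hi.le).1 (htmem (i+1) hi).2
  have hfin : ∀ i, i < n → eVariationOn γ (Set.Icc (t i) (t (i+1))) ≠ ⊤ := fun i hi =>
    ne_top_of_le_ne_top hLne (eVariationOn.mono γ (hsubI i hi))
  set D : ℕ → ℝ := fun i => (eVariationOn γ (Set.Icc (t i) (t (i+1)))).toReal with hD
  -- mesh
  have hmesh : ∀ i < n, t (i+1) - t i < δI := by
    intro i hi
    have h1 := hball i hi ⟨le_rfl, (hlt i hi).le⟩
    have h2 := hball i hi ⟨(hlt i hi).le, le_rfl⟩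
    have h3 : g (s i) ≤ δI / 2 := by
      simp only [hgdef, dif_pos (hsmem i hi)]
      exact min_le_right _ _
    have := h1.1; have := h2.2
    simp only [Set.mem_Ioo] at h1 h2
    linarith [h1.1, h2.2]
  -- Riemann sum estimate
  have hR : |I - ∑ i ∈ Finset.range n, w (γ (s i)) * D i| < ε₃ :=
    hIR n t s hn ht0 htn hlt hmesh hmem
  -- piece estimates
  have hpiece : ∀ i < n, dist (f (γ (t i))) (f (γ (t (i+1)))) ≤ (C' * w (γ (s i)) + ε₂) * D i := by
    intro i hi
    have hsi := hsmem i hi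
    have hti := htmem i hi.le
    have hti1 := htmem (i+1) hi
    have hb1 := hball i hi ⟨le_rfl, (hlt i hi).le⟩
    have hb2 := hball i hi ⟨(hlt i hi).le, le_rfl⟩
    have hg_le : g (s i) ≤ ρ (s i) hsi := by
      simp only [hgdef, dif_pos hsi]
      exact min_le_left _ _
    have est1 : dist (f (γ (s i))) (f (γ (t i))) ≤
        (C' * w (γ (s i)) + ε₂) * dist (γ (s i)) (γ (t i)) := by
      refine hρ (s i) hsi (t i) hti ?_
      simp only [Set.mem_Ioo] at hb1
      rw [abs_sub_lt_iff]
      exact ⟨by linarith [hb1.1, hg_le], by linarith [hb1.2, hg_le, (hmem i hi).1]⟩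
    have est2 : dist (f (γ (s i))) (f (γ (t (i+1)))) ≤
        (C' * w (γ (s i)) + ε₂) * dist (γ (s i)) (γ (t (i+1))) := by
      refine hρ (s i) hsi (t (i+1)) hti1 ?_
      simp only [Set.mem_Ioo] at hb2
      rw [abs_sub_lt_iff]
      exact ⟨by linarith [hb2.1, hg_le, (hmem i hi).2], by linarith [hb2.2, hg_le]⟩
    -- distances bounded by variation on half-pieces
    have hms := hmem i hi
    have hfin1 : eVariationOn γ (Set.Icc (t i) (s i)) ≠ ⊤ :=
      ne_top_of_le_ne_top (hfin i hi)
        (eVariationOn.mono γ (Set.Icc_subset_Icc le_rfl hms.2))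
    have hfin2 : eVariationOn γ (Set.Icc (s i) (t (i+1))) ≠ ⊤ :=
      ne_top_of_le_ne_top (hfin i hi)
        (eVariationOn.mono γ (Set.Icc_subset_Icc hms.1 le_rfl))
    have hd1 : dist (γ (s i)) (γ (t i)) ≤ (eVariationOn γ (Set.Icc (t i) (s i))).toReal := by
      rw [dist_edist]
      exact ENNReal.toReal_mono hfin1
        (eVariationOn.edist_le γ ⟨hms.1, le_rfl⟩ ⟨le_rfl, hms.1⟩)
    have hd2 : dist (γ (s i)) (γ (t (i+1))) ≤
        (eVariationOn γ (Set.Icc (s i) (t (i+1)))).toReal := by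
      rw [dist_edist]
      exact ENNReal.toReal_mono hfin2
        (eVariationOn.edist_le γ ⟨le_rfl, hms.2⟩ ⟨hms.2, le_rfl⟩)
    have hsplit : eVariationOn γ (Set.Icc (t i) (s i)) + eVariationOn γ (Set.Icc (s i) (t (i+1)))
        = eVariationOn γ (Set.Icc (t i) (t (i+1))) := by
      have h := eVariationOn.Icc_add_Icc γ (s := Set.Icc (t i) (t (i+1))) hms.1 hms.2
        ⟨hms.1, hms.2⟩
      rwa [Set.inter_eq_self_of_subset_right (Set.Icc_subset_Icc le_rfl hms.2),
        Set.inter_eq_self_of_subset_right (Set.Icc_subset_Icc hms.1 le_rfl),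
        Set.inter_self] at h
    have hDsum : (eVariationOn γ (Set.Icc (t i) (s i))).toReal +
        (eVariationOn γ (Set.Icc (s i) (t (i+1)))).toReal = D i := by
      rw [← ENNReal.toReal_add hfin1 hfin2, hsplit]
    have hcnn : (0:ℝ) ≤ C' * w (γ (s i)) + ε₂ := add_nonneg (mul_nonneg hC' (hw _)) hε₂pos.le
    calc dist (f (γ (t i))) (f (γ (t (i+1))))
        ≤ dist (f (γ (s i))) (f (γ (t i))) + dist (f (γ (s i))) (f (γ (t (i+1)))) :=
          dist_triangle_left _ _ _
      _ ≤ (C' * w (γ (s i)) + ε₂) * dist (γ (s i)) (γ (t i)) +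
          (C' * w (γ (s i)) + ε₂) * dist (γ (s i)) (γ (t (i+1))) := add_le_add est1 est2
      _ ≤ (C' * w (γ (s i)) + ε₂) * ((eVariationOn γ (Set.Icc (t i) (s i))).toReal +
          (eVariationOn γ (Set.Icc (s i) (t (i+1)))).toReal) := by
          rw [mul_add]; exact add_le_add (mul_le_mul_of_nonneg_left hd1 hcnn)
            (mul_le_mul_of_nonneg_left hd2 hcnn)
      _ = (C' * w (γ (s i)) + ε₂) * D i := by rw [hDsum]
  -- sum of D's equals L
  have hDL : ∑ i ∈ Finset.range n, D i = L := by
    have hchain : ∀ k, k ≤ n →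
        ∑ i ∈ Finset.range k, eVariationOn γ (Set.Icc (t i) (t (i+1)))
          = eVariationOn γ (Set.Icc (t 0) (t k)) := by
      intro k hk
      induction k with
      | zero =>
        rw [Finset.sum_range_zero, Set.Icc_self]
        exact (eVariationOn.subsingleton γ Set.subsingleton_singleton).symm
      | succ m ih =>
        rw [Finset.sum_range_succ, ih ((Nat.le_succ m).trans hk)]
        have h0m : t 0 ≤ t m := tmono 0 m (Nat.zero_le m) ((Nat.le_succ m).trans hk)
        have hmm : t m ≤ t (m+1) := (hlt m (Nat.lt_of_succ_le hk)).le
        have h := eVariationOn.Icc_add_Icc γ (s := Set.Icc (t 0) (t (m+1))) h0m hmm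
          ⟨h0m, hmm⟩
        rwa [Set.inter_eq_self_of_subset_right (Set.Icc_subset_Icc le_rfl hmm),
          Set.inter_eq_self_of_subset_right (Set.Icc_subset_Icc h0m le_rfl),
          Set.inter_self] at h
    have h := hchain n le_rfl
    rw [ht0, htn] at h
    rw [hLdef, ← h, ENNReal.toReal_sum (fun i hi => hfin i (Finset.mem_range.1 hi))]
  -- putting everything together
  have hRle : ∑ i ∈ Finset.range n, w (γ (s i)) * D i ≤ I + ε₃ := by
    have := abs_lt.1 hR
    linarith [this.1]
  have hDnn : ∀ i ∈ Finset.range n, (0:ℝ) ≤ D i := fun i _ => ENNReal.toReal_nonneg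
  calc dist (f (γ 0)) (f (γ 1))
      = dist (f (γ (t 0))) (f (γ (t n))) := by rw [ht0, htn]
    _ ≤ ∑ i ∈ Finset.range n, dist (f (γ (t i))) (f (γ (t (i+1)))) :=
        dist_le_range_sum_dist (fun i => f (γ (t i))) n
    _ ≤ ∑ i ∈ Finset.range n, (C' * w (γ (s i)) + ε₂) * D i :=
        Finset.sum_le_sum (fun i hi => hpiece i (Finset.mem_range.1 hi))
    _ = C' * (∑ i ∈ Finset.range n, w (γ (s i)) * D i) + ε₂ * (∑ i ∈ Finset.range n, D i) := by
        rw [Finset.mul_sum, Finset.mul_sum, ← Finset.sum_add_distrib]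
        exact Finset.sum_congr rfl (fun i _ => by ring)
    _ ≤ C' * (I + ε₃) + ε₂ * L := by
        rw [hDL]
        exact add_le_add_left (mul_le_mul_of_nonneg_left hRle hC') _
    _ ≤ C' * I + ε := by
        have k1 : ε₃ * (2 * (C' + 1)) = ε := div_mul_cancel₀ _ (by positivity)
        have k2 : ε₂ * (2 * (L + 1)) = ε := div_mul_cancel₀ _ (by positivity)
        nlinarith [hε₃pos, hε₂pos, hC', hL0]

theorem bloch_extends_to_completion {X Y : Type*} [MetricSpace X] [MetricSpace Y]
    [CompleteSpace Y]
    (w : X → ℝ) (hwc : Continuous w) (hwpos : ∀ x, 0 < w x)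
    (φ : ℝ → ℝ) (hφ0 : φ 0 = 0) (hφc : ContinuousWithinAt φ (Set.Ici 0) 0)
    (hφnn : ∀ t ≥ (0:ℝ), 0 ≤ φ t)
    (M : ℝ) (hM : 0 < M)
    (hcurve : ∀ x y : X, ∃ γ : ℝ → X, ∃ I : ℝ, IsCurveFrom γ x y ∧ RectifiableCurve γ ∧
      IsCurveIntegral γ w I ∧ I ≤ M * φ (dist x y))
    (f : X → Y) (C : ℝ)
    (hB : ∀ z, Dstar f z ≤ ENNReal.ofReal (C * w z)) :
    ∃ g : UniformSpace.Completion X → Y, Continuous g ∧ ∀ x : X, g x = f x := by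
  have hw : ∀ x, 0 ≤ w x := fun x => (hwpos x).le
  set C' := max C 0 with hC'def
  have hC' : 0 ≤ C' := le_max_right _ _
  have hB' : ∀ z, Dstar f z ≤ ENNReal.ofReal (C' * w z) := fun z =>
    (hB z).trans (ENNReal.ofReal_le_ofReal
      (mul_le_mul_of_nonneg_right (le_max_left _ _) (hw z)))
  have hUC : UniformContinuous f := by
    rw [Metric.uniformContinuous_iff]
    intro ε hε
    have hq : (0:ℝ) < ε / (C' * M + 1) := by positivity
    have htend : Filter.Tendsto φ (nhdsWithin 0 (Set.Ici 0)) (nhds 0) := by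
      have := hφc
      rwa [ContinuousWithinAt, hφ0] at this
    have hev : ∀ᶠ r in nhdsWithin 0 (Set.Ici 0), φ r < ε / (C' * M + 1) :=
      htend.eventually_lt_const hq
    obtain ⟨δ, hδ, hsub⟩ := Metric.mem_nhdsWithin_iff.1 hev
    refine ⟨δ, hδ, fun {x y} hxy => ?_⟩
    have hφd : φ (dist x y) < ε / (C' * M + 1) := by
      refine hsub ⟨?_, dist_nonneg⟩
      rw [Metric.mem_ball, Real.dist_eq, sub_zero, abs_of_nonneg dist_nonneg]
      exact hxy
    obtain ⟨γ, I, ⟨hγc, hγ0, hγ1⟩, hrect, hint, hIle⟩ := hcurve x y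
    have h1 : dist (f x) (f y) ≤ C' * I := by
      rw [← hγ0, ← hγ1]
      exact curve_estimate w hw f C' hC' hB' γ hγc hrect I hint
    have h2 : C' * I ≤ C' * (M * φ (dist x y)) := mul_le_mul_of_nonneg_left hIle hC'
    have h3 : C' * (M * φ (dist x y)) ≤ (C' * M) * (ε / (C' * M + 1)) := by
      rw [mul_assoc]
      exact mul_le_mul_of_nonneg_left (mul_le_mul_of_nonneg_left hφd.le hM.le) hC'
    have h4 : (C' * M) * (ε / (C' * M + 1)) < ε := by
      have k1 : (ε / (C' * M + 1)) * (C' * M + 1) = ε := div_mul_cancel₀ _ (by positivity)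
      nlinarith [hq, mul_nonneg hC' hM.le]
    linarith
  exact ⟨UniformSpace.Completion.extension f,
    UniformSpace.Completion.continuous_extension,
    fun x => UniformSpace.Completion.extension_coe hUC x⟩
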